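/- Let d ≥ 1, r > 0, a > 0, δ > 0, and let ε > 0 satisfy ε < #S · υ_d · r^d. Let P ⊆ ℝ^d be locally finite and let S ⊆ P be finite and nonempty. Suppose Σ_{x∈S} Σ_{z∈ℤ^d} | #((P ∩ Q_{δ,z} ∩ B̄_r(x)) \ S)/a − vol(Q_{δ,z} ∩ B̄_r(x)) | ≤ ε. Set N := Σ_{x∈S} #((P ∩ B̄_r(x)) \ S). Then N > 0 and Σ_{z∈ℤ^d} | (Σ_{x∈S} #((P ∩ Q_{δ,z} ∩ B̄_r(x)) \ S))/N − (Σ_{x∈S} vol(Q_{δ,z} ∩ B̄_r(x)))/(#S · υ_d · r^d) | ≤ 2ε/(#S · υ_d · r^d). -/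

import Mathlib

open MeasureTheory Metric

/-- The cube `δ z + [-δ/2, δ/2)^d` of the grid `𝒞_δ`. -/
def gridCube (d : ℕ) (δ : ℝ) (z : Fin d → ℤ) : Set (EuclideanSpace ℝ (Fin d)) :=
  {y | ∀ i : Fin d, δ * (z i : ℝ) - δ / 2 ≤ y i ∧ y i < δ * (z i : ℝ) + δ / 2}

/-- Index of the cube containing a point. -/
noncomputable def cubeIdx (d : ℕ) (δ : ℝ) (y : EuclideanSpace ℝ (Fin d)) : Fin d → ℤ :=
  fun i => ⌊y i / δ + 1/2⌋

lemma mem_gridCube_iff {d : ℕ} {δ : ℝ} (hδ : 0 < δ) (z : Fin d → ℤ)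
    (y : EuclideanSpace ℝ (Fin d)) : y ∈ gridCube d δ z ↔ cubeIdx d δ y = z := by
  simp only [gridCube, Set.mem_setOf_eq, cubeIdx, funext_iff]
  refine forall_congr' fun i => ?_
  rw [Int.floor_eq_iff]
  constructor
  · rintro ⟨h1, h2⟩
    constructor
    · rw [← sub_le_iff_le_add, le_div_iff₀ hδ]
      nlinarith
    · rw [← lt_sub_iff_add_lt, div_lt_iff₀ hδ]
      nlinarith
  · rintro ⟨h1, h2⟩
    rw [← sub_le_iff_le_add, le_div_iff₀ hδ] at h1
    rw [← lt_sub_iff_add_lt, div_lt_iff₀ hδ] at h2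
    constructor <;> nlinarith

lemma gridCube_eq {d : ℕ} {δ : ℝ} (hδ : 0 < δ) (z : Fin d → ℤ) :
    gridCube d δ z = cubeIdx d δ ⁻¹' {z} := by
  ext y; simp [mem_gridCube_iff hδ]

lemma measurableSet_gridCube {d : ℕ} {δ : ℝ} (z : Fin d → ℤ) :
    MeasurableSet (gridCube d δ z) := by
  have h : gridCube d δ z = ⋂ i, (fun y : EuclideanSpace ℝ (Fin d) => y i) ⁻¹'
      Set.Ico (δ * (z i : ℝ) - δ / 2) (δ * (z i : ℝ) + δ / 2) := by
    ext y; simp [gridCube, Set.mem_iInter]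
  rw [h]
  exact MeasurableSet.iInter fun i =>
    ((PiLp.continuous_apply 2 _ i).measurable) measurableSet_Ico

lemma count_tsum {α β : Type*} [Countable β] {T : Set α} (hT : T.Finite) (c : α → β) :
    Summable (fun z : β => ((T ∩ c ⁻¹' {z}).ncard : ℝ)) ∧
    ∑' z : β, ((T ∩ c ⁻¹' {z}).ncard : ℝ) = T.ncard := by
  classical
  have key : ∀ z : β, ((T ∩ c ⁻¹' {z}).ncard : ℝ) =
      ∑ t ∈ hT.toFinset, if c t = z then (1:ℝ) else 0 := by
    intro z
    rw [Finset.sum_boole]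
    congr 1
    rw [Set.ncard_eq_toFinset_card _ (hT.subset Set.inter_subset_left)]
    congr 1
    ext t
    simp only [Set.Finite.mem_toFinset, Set.mem_inter_iff, Set.mem_preimage,
      Set.mem_singleton_iff, Finset.mem_filter]
  have hsummand : ∀ t ∈ hT.toFinset, Summable (fun z : β => if c t = z then (1:ℝ) else 0) := by
    intro t _
    apply summable_of_ne_finset_zero (s := {c t})
    intro z hz
    simp only [Finset.mem_singleton] at hz
    rw [if_neg (fun h => hz h.symm)]
  constructor
  · simp only [key]
    exact summable_sum hsummand
  · simp only [key]
    rw [Summable.tsum_finsetSum hsummand]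
    have h1 : ∀ t ∈ hT.toFinset, ∑' z : β, (if c t = z then (1:ℝ) else 0) = 1 := by
      intro t _
      rw [tsum_eq_single (c t)]
      · simp
      · intro b hb; rw [if_neg (fun h : c t = b => hb h.symm)]
    rw [Finset.sum_congr rfl h1, Finset.sum_const, nsmul_eq_mul, mul_one,
      Set.ncard_eq_toFinset_card _ hT]

lemma vol_tsum {d : ℕ} {δ : ℝ} (hδ : 0 < δ) (B : Set (EuclideanSpace ℝ (Fin d)))
    (hB : MeasurableSet B) :
    ∑' z : Fin d → ℤ, volume (gridCube d δ z ∩ B) = volume B := by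
  have hcover : ⋃ z : Fin d → ℤ, gridCube d δ z ∩ B = B := by
    ext y
    simp only [Set.mem_iUnion, Set.mem_inter_iff, mem_gridCube_iff hδ]
    exact ⟨fun ⟨z, _, hy⟩ => hy, fun hy => ⟨cubeIdx d δ y, rfl, hy⟩⟩
  have hdisj : Pairwise (Function.onFun Disjoint (fun z : Fin d → ℤ => gridCube d δ z ∩ B)) := by
    intro z z' hzz'
    refine Set.disjoint_left.mpr ?_
    rintro y ⟨hy1, -⟩ ⟨hy2, -⟩
    rw [mem_gridCube_iff hδ] at hy1 hy2
    exact hzz' (hy1.symm.trans hy2)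
  calc ∑' z : Fin d → ℤ, volume (gridCube d δ z ∩ B)
      = volume (⋃ z : Fin d → ℤ, gridCube d δ z ∩ B) :=
        (measure_iUnion hdisj fun z => (measurableSet_gridCube z).inter hB).symm
    _ = volume B := by rw [hcover]

lemma kernel_calc {ι : Type*} (A B : ι → ℝ) (a ε V N : ℝ)
    (hA0 : ∀ z, 0 ≤ A z)
    (hAs : Summable A) (hBs : Summable B)
    (hN : ∑' z, A z = N) (hV : ∑' z, B z = V)
    (hD : Summable (fun z => |A z / a - B z|)) (hDε : ∑' z, |A z / a - B z| ≤ ε)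
    (ha : 0 < a) (hε : 0 < ε) (hεV : ε < V) :
    0 < N ∧ Summable (fun z => |A z / N - B z / V|) ∧
      ∑' z, |A z / N - B z / V| ≤ 2 * ε / V := by
  have hVpos : 0 < V := hε.trans hεV
  have h1 : ∑' z, (A z / a - B z) = N / a - V := by
    rw [Summable.tsum_sub (hAs.div_const a) hBs, tsum_div_const, hN, hV]
  have hNa : |N / a - V| ≤ ε := by
    rw [← h1]
    have hD' : Summable (fun z => ‖A z / a - B z‖) := by
      simp only [Real.norm_eq_abs]; exact hD
    have habs := norm_tsum_le_tsum_norm hD'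
    simp only [Real.norm_eq_abs] at habs
    exact habs.trans hDε
  have hNpos : 0 < N := by
    have h2 : 0 < N / a := by
      have := abs_le.mp hNa; linarith
    rcases div_pos_iff.mp h2 with ⟨h, _⟩ | ⟨_, h⟩
    · exact h
    · linarith
  have hpt : ∀ z, |A z / N - B z / V| ≤ |A z / a - B z| / V + A z * |1/N - 1/(a*V)| := by
    intro z
    have heq : A z / N - B z / V = (A z / a - B z) / V + A z * (1/N - 1/(a*V)) := by
      field_simp
      ring
    rw [heq]
    refine (abs_add_le _ _).trans ?_
    rw [abs_div, abs_of_pos hVpos, abs_mul, abs_of_nonneg (hA0 z)]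
  have hmaj : Summable (fun z => |A z / a - B z| / V + A z * |1/N - 1/(a*V)|) :=
    (hD.div_const V).add (hAs.mul_right _)
  have hg : Summable (fun z => |A z / N - B z / V|) :=
    Summable.of_nonneg_of_le (fun z => abs_nonneg _) hpt hmaj
  refine ⟨hNpos, hg, ?_⟩
  have hterm2 : N * |1/N - 1/(a*V)| = |V - N/a| / V := by
    have e1 : |V - N/a| / V = |(V - N/a)/V| := by rw [abs_div, abs_of_pos hVpos]
    have e2 : N * |1/N - 1/(a*V)| = |N * (1/N - 1/(a*V))| := by
      rw [abs_mul, abs_of_nonneg hNpos.le]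
    rw [e1, e2]
    congr 1
    field_simp
  calc ∑' z, |A z / N - B z / V|
      ≤ ∑' z, (|A z / a - B z| / V + A z * |1/N - 1/(a*V)|) := Summable.tsum_le_tsum hpt hg hmaj
    _ = (∑' z, |A z / a - B z|) / V + N * |1/N - 1/(a*V)| := by
        rw [Summable.tsum_add (hD.div_const V) (hAs.mul_right _), tsum_div_const, tsum_mul_right, hN]
    _ ≤ ε / V + |V - N/a| / V := by
        rw [hterm2]
        gcongr
    _ ≤ ε / V + ε / V := by
        gcongr
        rw [abs_sub_comm] at hNa
        exact hNa
    _ = 2 * ε / V := by ring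

/-- Total-variation-on-cubes bound between the empirical spatial kernel `K_α(S,·)`
and the limiting spatial kernel `K(S,·)` (core of Lemma 4.4). -/
theorem spatial_kernels_close
    (d : ℕ) (hd : 1 ≤ d) (r a δ ε : ℝ) (hr : 0 < r) (ha : 0 < a) (hδ : 0 < δ) (hε : 0 < ε)
    (P : Set (EuclideanSpace ℝ (Fin d)))
    (hloc : ∀ K : Set (EuclideanSpace ℝ (Fin d)), Bornology.IsBounded K → (P ∩ K).Finite)
    (S : Finset (EuclideanSpace ℝ (Fin d))) (hSP : ↑S ⊆ P) (hSne : S.Nonempty)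
    (hεS : ε < (S.card : ℝ) *
        (volume (closedBall (0 : EuclideanSpace ℝ (Fin d)) 1)).toReal * r ^ d)
    (hyp : ∑ x ∈ S, ∑' z : Fin d → ℤ,
        ENNReal.ofReal
          |(((P ∩ gridCube d δ z ∩ closedBall x r) \ ↑S).ncard : ℝ) / a -
            (volume (gridCube d δ z ∩ closedBall x r)).toReal|
      ≤ ENNReal.ofReal ε) :
    0 < ∑ x ∈ S, ((P ∩ closedBall x r) \ ↑S).ncard ∧
    ∑' z : Fin d → ℤ,
        ENNReal.ofReal
          |(∑ x ∈ S, ((((P ∩ gridCube d δ z ∩ closedBall x r) \ ↑S).ncard : ℝ))) /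
              ((∑ x ∈ S, ((P ∩ closedBall x r) \ ↑S).ncard : ℕ) : ℝ) -
            (∑ x ∈ S, (volume (gridCube d δ z ∩ closedBall x r)).toReal) /
              ((S.card : ℝ) *
                (volume (closedBall (0 : EuclideanSpace ℝ (Fin d)) 1)).toReal * r ^ d)|
      ≤ ENNReal.ofReal (2 * ε /
          ((S.card : ℝ) *
            (volume (closedBall (0 : EuclideanSpace ℝ (Fin d)) 1)).toReal * r ^ d)) := by
  classical
  set υ : ℝ := (volume (closedBall (0 : EuclideanSpace ℝ (Fin d)) 1)).toReal with hυdef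
  set V : ℝ := (S.card : ℝ) * υ * r ^ d with hVdef
  -- finiteness of the point sets
  have hTfin : ∀ x : EuclideanSpace ℝ (Fin d), ((P ∩ closedBall x r) \ ↑S).Finite :=
    fun x => ((hloc _ isBounded_closedBall).subset Set.diff_subset)
  have hsetx : ∀ (x : EuclideanSpace ℝ (Fin d)) (z : Fin d → ℤ),
      (P ∩ gridCube d δ z ∩ closedBall x r) \ ↑S
        = ((P ∩ closedBall x r) \ ↑S) ∩ cubeIdx d δ ⁻¹' {z} := by
    intro x z
    rw [gridCube_eq hδ]
    ext y
    simp only [Set.mem_diff, Set.mem_inter_iff]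
    tauto
  -- count sums
  have hfxS : ∀ x : EuclideanSpace ℝ (Fin d),
      Summable (fun z : Fin d → ℤ =>
        (((P ∩ gridCube d δ z ∩ closedBall x r) \ ↑S).ncard : ℝ)) := by
    intro x
    simp only [hsetx x]
    exact (count_tsum (hTfin x) (cubeIdx d δ)).1
  have hfxT : ∀ x : EuclideanSpace ℝ (Fin d),
      ∑' z : Fin d → ℤ, (((P ∩ gridCube d δ z ∩ closedBall x r) \ ↑S).ncard : ℝ)
        = (((P ∩ closedBall x r) \ ↑S).ncard : ℝ) := by
    intro x
    simp only [hsetx x]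
    exact (count_tsum (hTfin x) (cubeIdx d δ)).2
  -- volume sums
  have hμ : ∀ x : EuclideanSpace ℝ (Fin d),
      ∑' z : Fin d → ℤ, volume (gridCube d δ z ∩ closedBall x r) = volume (closedBall x r) :=
    fun x => vol_tsum hδ _ measurableSet_closedBall
  have hvb : ∀ x : EuclideanSpace ℝ (Fin d),
      volume (closedBall x r)
        = ENNReal.ofReal (r ^ d) * volume (closedBall (0 : EuclideanSpace ℝ (Fin d)) 1) := by
    intro x
    rw [Measure.addHaar_closedBall' _ _ hr.le, finrank_euclideanSpace_fin]
  have hvol_ne : ∀ (x : EuclideanSpace ℝ (Fin d)) (z : Fin d → ℤ),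
      volume (gridCube d δ z ∩ closedBall x r) ≠ ⊤ :=
    fun x z => ((measure_mono Set.inter_subset_right).trans_lt measure_closedBall_lt_top).ne
  have hvxS : ∀ x : EuclideanSpace ℝ (Fin d),
      Summable (fun z : Fin d → ℤ => (volume (gridCube d δ z ∩ closedBall x r)).toReal) := by
    intro x
    refine ENNReal.summable_toReal ?_
    rw [hμ x]
    exact measure_closedBall_lt_top.ne
  have hvxT : ∀ x : EuclideanSpace ℝ (Fin d),
      ∑' z : Fin d → ℤ, (volume (gridCube d δ z ∩ closedBall x r)).toReal = r ^ d * υ := by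
    intro x
    rw [← ENNReal.tsum_toReal_eq (hvol_ne x), hμ x, hvb x, ENNReal.toReal_mul,
      ENNReal.toReal_ofReal (by positivity)]
  -- process the hypothesis
  have hxfin : ∀ x ∈ S, (∑' z : Fin d → ℤ,
      ENNReal.ofReal
        |(((P ∩ gridCube d δ z ∩ closedBall x r) \ ↑S).ncard : ℝ) / a -
          (volume (gridCube d δ z ∩ closedBall x r)).toReal|) ≠ ⊤ := by
    intro x hx
    exact (((Finset.single_le_sum (fun _ _ => zero_le) hx).trans hyp).trans_lt
      ENNReal.ofReal_lt_top).ne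
  have hhxS : ∀ x ∈ S, Summable (fun z : Fin d → ℤ =>
      |(((P ∩ gridCube d δ z ∩ closedBall x r) \ ↑S).ncard : ℝ) / a -
        (volume (gridCube d δ z ∩ closedBall x r)).toReal|) := by
    intro x hx
    have h := ENNReal.summable_toReal (hxfin x hx)
    have hfun : (fun z : Fin d → ℤ => (ENNReal.ofReal
        |(((P ∩ gridCube d δ z ∩ closedBall x r) \ ↑S).ncard : ℝ) / a -
          (volume (gridCube d δ z ∩ closedBall x r)).toReal|).toReal)
        = fun z : Fin d → ℤ =>
        |(((P ∩ gridCube d δ z ∩ closedBall x r) \ ↑S).ncard : ℝ) / a -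
          (volume (gridCube d δ z ∩ closedBall x r)).toReal| := by
      funext z
      exact ENNReal.toReal_ofReal (abs_nonneg _)
    rwa [hfun] at h
  have hreal : ∑ x ∈ S, ∑' z : Fin d → ℤ,
      |(((P ∩ gridCube d δ z ∩ closedBall x r) \ ↑S).ncard : ℝ) / a -
        (volume (gridCube d δ z ∩ closedBall x r)).toReal| ≤ ε := by
    have hcongr : ∀ x ∈ S, ∑' z : Fin d → ℤ,
        ENNReal.ofReal
          |(((P ∩ gridCube d δ z ∩ closedBall x r) \ ↑S).ncard : ℝ) / a -
            (volume (gridCube d δ z ∩ closedBall x r)).toReal|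
        = ENNReal.ofReal (∑' z : Fin d → ℤ,
          |(((P ∩ gridCube d δ z ∩ closedBall x r) \ ↑S).ncard : ℝ) / a -
            (volume (gridCube d δ z ∩ closedBall x r)).toReal|) :=
      fun x hx => (ENNReal.ofReal_tsum_of_nonneg (fun _ => abs_nonneg _) (hhxS x hx)).symm
    rw [Finset.sum_congr rfl hcongr,
      ← ENNReal.ofReal_sum_of_nonneg (fun _ _ => tsum_nonneg fun _ => abs_nonneg _)] at hyp
    exact (ENNReal.ofReal_le_ofReal_iff hε.le).mp hyp
  -- apply the abstract computation
  have hpt : ∀ z : Fin d → ℤ,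
      |(∑ x ∈ S, ((((P ∩ gridCube d δ z ∩ closedBall x r) \ ↑S).ncard : ℝ))) / a -
        (∑ x ∈ S, (volume (gridCube d δ z ∩ closedBall x r)).toReal)|
      ≤ ∑ x ∈ S,
        |(((P ∩ gridCube d δ z ∩ closedBall x r) \ ↑S).ncard : ℝ) / a -
          (volume (gridCube d δ z ∩ closedBall x r)).toReal| := by
    intro z
    rw [Finset.sum_div, ← Finset.sum_sub_distrib]
    exact Finset.abs_sum_le_sum_abs _ _
  have hmajS : Summable (fun z : Fin d → ℤ => ∑ x ∈ S,
      |(((P ∩ gridCube d δ z ∩ closedBall x r) \ ↑S).ncard : ℝ) / a -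
        (volume (gridCube d δ z ∩ closedBall x r)).toReal|) := summable_sum hhxS
  have hD : Summable (fun z : Fin d → ℤ =>
      |(∑ x ∈ S, ((((P ∩ gridCube d δ z ∩ closedBall x r) \ ↑S).ncard : ℝ))) / a -
        (∑ x ∈ S, (volume (gridCube d δ z ∩ closedBall x r)).toReal)|) :=
    Summable.of_nonneg_of_le (fun _ => abs_nonneg _) hpt hmajS
  have hDε : ∑' z : Fin d → ℤ,
      |(∑ x ∈ S, ((((P ∩ gridCube d δ z ∩ closedBall x r) \ ↑S).ncard : ℝ))) / a -
        (∑ x ∈ S, (volume (gridCube d δ z ∩ closedBall x r)).toReal)| ≤ ε := by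
    refine (Summable.tsum_le_tsum hpt hD hmajS).trans ?_
    rw [Summable.tsum_finsetSum hhxS]
    exact hreal
  have hN : ∑' z : Fin d → ℤ,
      ∑ x ∈ S, ((((P ∩ gridCube d δ z ∩ closedBall x r) \ ↑S).ncard : ℝ))
      = ((∑ x ∈ S, ((P ∩ closedBall x r) \ ↑S).ncard : ℕ) : ℝ) := by
    rw [Summable.tsum_finsetSum (fun x _ => hfxS x), Finset.sum_congr rfl (fun x _ => hfxT x)]
    push_cast
    rfl
  have hV : ∑' z : Fin d → ℤ,
      ∑ x ∈ S, (volume (gridCube d δ z ∩ closedBall x r)).toReal = V := by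
    rw [Summable.tsum_finsetSum (fun x _ => hvxS x), Finset.sum_congr rfl (fun x _ => hvxT x),
      Finset.sum_const, nsmul_eq_mul, hVdef]
    ring
  have key := kernel_calc
    (fun z : Fin d → ℤ =>
      ∑ x ∈ S, ((((P ∩ gridCube d δ z ∩ closedBall x r) \ ↑S).ncard : ℝ)))
    (fun z : Fin d → ℤ =>
      ∑ x ∈ S, (volume (gridCube d δ z ∩ closedBall x r)).toReal)
    a ε V ((∑ x ∈ S, ((P ∩ closedBall x r) \ ↑S).ncard : ℕ) : ℝ)
    (fun z => Finset.sum_nonneg fun x _ => Nat.cast_nonneg _)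
    (summable_sum (fun x _ => hfxS x)) (summable_sum (fun x _ => hvxS x))
    hN hV hD hDε ha hε hεS
  obtain ⟨hNpos, hg, hsum⟩ := key
  constructor
  · exact_mod_cast hNpos
  · calc ∑' z : Fin d → ℤ,
        ENNReal.ofReal
          |(∑ x ∈ S, ((((P ∩ gridCube d δ z ∩ closedBall x r) \ ↑S).ncard : ℝ))) /
              ((∑ x ∈ S, ((P ∩ closedBall x r) \ ↑S).ncard : ℕ) : ℝ) -
            (∑ x ∈ S, (volume (gridCube d δ z ∩ closedBall x r)).toReal) / V|
        = ENNReal.ofReal (∑' z : Fin d → ℤ,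
          |(∑ x ∈ S, ((((P ∩ gridCube d δ z ∩ closedBall x r) \ ↑S).ncard : ℝ))) /
              ((∑ x ∈ S, ((P ∩ closedBall x r) \ ↑S).ncard : ℕ) : ℝ) -
            (∑ x ∈ S, (volume (gridCube d δ z ∩ closedBall x r)).toReal) / V|) :=
          (ENNReal.ofReal_tsum_of_nonneg (fun _ => abs_nonneg _) hg).symm
      _ ≤ ENNReal.ofReal (2 * ε / V) := ENNReal.ofReal_le_ofReal hsum
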